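/- Let n ≥ 1 be an integer and let ζ = exp(πi/n) ∈ ℂ. Then Σ_{j=1}^{2n−1} ζ^{−j}/(1−ζ^{−j})² = (1−4n²)/12 (an equality of complex numbers, the right-hand side being a rational number viewed in ℂ). -/

import Mathlib

open Finset


private lemma aux_poly (x : ℂ) (N : ℕ) :
    (1 - x) * ∑ k ∈ range N, (k : ℂ) * x ^ k =
      (∑ k ∈ range N, x ^ k) - 1 - ((N : ℂ) - 1) * x ^ N := by
  induction N with
  | zero => simp
  | succ N ih =>
    rw [sum_range_succ, sum_range_succ (fun k => x ^ k)]
    push_cast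
    linear_combination ih

private lemma aux_geom (x : ℂ) (m : ℕ) (hx : x ^ m = 1) (h1 : x ≠ 1) :
    ∑ k ∈ range m, x ^ k = 0 := by
  have h := geom_sum_mul x m
  rw [hx, sub_self] at h
  rcases mul_eq_zero.mp h with h' | h'
  · exact h'
  · exact absurd (by linear_combination h') h1

private lemma aux_S (x : ℂ) (m : ℕ) (hx : x ^ m = 1) (h1 : x ≠ 1) :
    (1 - x) * ∑ k ∈ range m, (k : ℂ) * x ^ k = -(m : ℂ) := by
  rw [aux_poly, aux_geom x m hx h1, hx]
  ring

private lemma aux_term (x : ℂ) (m : ℕ) (hm : m ≠ 0) (hx : x ^ m = 1) (h1 : x ≠ 1) :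
    x⁻¹ / (1 - x⁻¹) ^ 2 =
      -((∑ k ∈ range m, (k : ℂ) * (x⁻¹) ^ k) * (∑ k ∈ range m, (k : ℂ) * x ^ k))
        / (m : ℂ) ^ 2 := by
  have hx0 : x ≠ 0 := fun h => by simp [h, zero_pow hm] at hx
  have hy1 : x⁻¹ ≠ 1 := fun h => h1 (inv_eq_one.mp h)
  have hym : (x⁻¹) ^ m = 1 := by rw [inv_pow, hx, inv_one]
  have hxne : (1 : ℂ) - x ≠ 0 := fun h => h1 (by linear_combination -h)
  have hyne : (1 : ℂ) - x⁻¹ ≠ 0 := fun h => hy1 (by linear_combination -h)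
  have hm0 : (m : ℂ) ≠ 0 := Nat.cast_ne_zero.mpr hm
  have hA : (∑ k ∈ range m, (k : ℂ) * x ^ k) = -(m : ℂ) / (1 - x) :=
    (eq_div_iff hxne).mpr (by linear_combination aux_S x m hx h1)
  have hB : (∑ k ∈ range m, (k : ℂ) * (x⁻¹) ^ k) = -(m : ℂ) / (1 - x⁻¹) :=
    (eq_div_iff hyne).mpr (by linear_combination aux_S x⁻¹ m hym hy1)
  rw [hA, hB]
  generalize hy : x⁻¹ = y at hyne ⊢
  have hxy : x * y = 1 := by rw [← hy]; exact mul_inv_cancel₀ hx0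
  field_simp
  linear_combination -hxy

/-- For `n ≥ 1` and `ζ = exp(πi/n)`:
`∑_{j=1}^{2n-1} ζ^{-j}/(1-ζ^{-j})² = (1-4n²)/12`. -/
theorem beta_sum_prism_v0 (n : ℕ) (hn : 1 ≤ n) (ζ : ℂ)
    (hζ : ζ = Complex.exp (Real.pi * Complex.I / n)) :
    ∑ j ∈ Finset.Icc 1 (2 * n - 1), ζ ^ (-(j : ℤ)) / (1 - ζ ^ (-(j : ℤ))) ^ 2 =
      (1 - 4 * (n : ℂ) ^ 2) / 12 := by
  have hm0 : 2 * n ≠ 0 := by omega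
  have hprim : IsPrimitiveRoot ζ (2 * n) := by
    have h := Complex.isPrimitiveRoot_exp (2 * n) hm0
    have hn0 : (n : ℂ) ≠ 0 := Nat.cast_ne_zero.mpr (by omega)
    have harg : (Real.pi : ℂ) * Complex.I / n
        = 2 * Real.pi * Complex.I / ((2 * n : ℕ) : ℂ) := by
      push_cast
      field_simp
    rw [hζ, harg]; exact h
  set m := 2 * n with hmdef
  have hm1 : 1 ≤ m := by omega
  have hmC : ((m : ℕ) : ℂ) ≠ 0 := Nat.cast_ne_zero.mpr hm0
  have hz0 : ζ ≠ 0 := hprim.ne_zero hm0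
  have hzm : ζ ^ m = 1 := hprim.pow_eq_one
  have hrange : range m = insert 0 (Finset.Icc 1 (m - 1)) := by
    ext j
    simp only [Finset.mem_range, Finset.mem_insert, Finset.mem_Icc]
    omega
  -- step 1: rewrite each term
  have h1 : ∑ j ∈ Finset.Icc 1 (m - 1), ζ ^ (-(j : ℤ)) / (1 - ζ ^ (-(j : ℤ))) ^ 2
      = ∑ j ∈ Finset.Icc 1 (m - 1),
          -((∑ k ∈ range m, (k : ℂ) * ((ζ ^ j)⁻¹) ^ k)
            * (∑ k ∈ range m, (k : ℂ) * (ζ ^ j) ^ k)) / (m : ℂ) ^ 2 := by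
    refine Finset.sum_congr rfl fun j hj => ?_
    rw [Finset.mem_Icc] at hj
    have hxm : (ζ ^ j) ^ m = 1 := by
      rw [← pow_mul, mul_comm, pow_mul, hzm, one_pow]
    have hx1 : ζ ^ j ≠ 1 := hprim.pow_ne_one_of_pos_of_lt (by omega) (by omega)
    have hzj : ζ ^ (-(j : ℤ)) = (ζ ^ j)⁻¹ := by rw [zpow_neg, zpow_natCast]
    rw [hzj]
    exact aux_term (ζ ^ j) m hm0 hxm hx1
  rw [h1]
  -- step 2: expand products and swap sums
  have hBA : ∀ j : ℕ,
      (∑ k ∈ range m, (k : ℂ) * ((ζ ^ j)⁻¹) ^ k) * (∑ k ∈ range m, (k : ℂ) * (ζ ^ j) ^ k)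
        = ∑ k ∈ range m, ∑ l ∈ range m, ((k : ℂ) * l) * ((ζ ^ l * (ζ ^ k)⁻¹) ^ j) := by
    intro j
    rw [Finset.sum_mul_sum]
    refine Finset.sum_congr rfl fun k _ => Finset.sum_congr rfl fun l _ => ?_
    have e1 : ((ζ ^ j)⁻¹) ^ k = ((ζ ^ k)⁻¹) ^ j := by
      rw [inv_pow, inv_pow, ← pow_mul, ← pow_mul, mul_comm]
    have e2 : (ζ ^ j) ^ l = (ζ ^ l) ^ j := by
      rw [← pow_mul, ← pow_mul, mul_comm]
    rw [e1, e2, mul_pow]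
    ring
  have h2 : ∑ j ∈ Finset.Icc 1 (m - 1),
        -((∑ k ∈ range m, (k : ℂ) * ((ζ ^ j)⁻¹) ^ k)
          * (∑ k ∈ range m, (k : ℂ) * (ζ ^ j) ^ k)) / (m : ℂ) ^ 2
      = -(∑ k ∈ range m, ∑ l ∈ range m, ∑ j ∈ Finset.Icc 1 (m - 1),
            ((k : ℂ) * l) * ((ζ ^ l * (ζ ^ k)⁻¹) ^ j)) / (m : ℂ) ^ 2 := by
    have e1 : ∑ j ∈ Finset.Icc 1 (m - 1),
        -((∑ k ∈ range m, (k : ℂ) * ((ζ ^ j)⁻¹) ^ k)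
          * (∑ k ∈ range m, (k : ℂ) * (ζ ^ j) ^ k)) / (m : ℂ) ^ 2
        = ∑ j ∈ Finset.Icc 1 (m - 1),
            -(∑ k ∈ range m, ∑ l ∈ range m,
                ((k : ℂ) * l) * ((ζ ^ l * (ζ ^ k)⁻¹) ^ j)) / (m : ℂ) ^ 2 :=
      Finset.sum_congr rfl fun j _ => by rw [hBA j]
    have e2 : (∑ j ∈ Finset.Icc 1 (m - 1), ∑ k ∈ range m, ∑ l ∈ range m,
          ((k : ℂ) * l) * ((ζ ^ l * (ζ ^ k)⁻¹) ^ j))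
        = ∑ k ∈ range m, ∑ l ∈ range m, ∑ j ∈ Finset.Icc 1 (m - 1),
            ((k : ℂ) * l) * ((ζ ^ l * (ζ ^ k)⁻¹) ^ j) := by
      rw [Finset.sum_comm]
      exact Finset.sum_congr rfl fun k _ => Finset.sum_comm
    rw [e1, ← Finset.sum_div, Finset.sum_neg_distrib, e2]
  rw [h2]
  have hinner : ∀ k ∈ range m, ∀ l ∈ range m,
      (∑ j ∈ Finset.Icc 1 (m - 1), ((k : ℂ) * l) * ((ζ ^ l * (ζ ^ k)⁻¹) ^ j))
        = ((k : ℂ) * l) * ((if k = l then (m : ℂ) else 0) - 1) := by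
    intro k hk l hl
    rw [← Finset.mul_sum]
    congr 1
    set w := ζ ^ l * (ζ ^ k)⁻¹ with hw
    have hpow : ∀ a : ℕ, (ζ ^ a) ^ m = 1 := fun a => by
      rw [← pow_mul, mul_comm, pow_mul, hzm, one_pow]
    have hwm : w ^ m = 1 := by
      rw [hw, mul_pow, inv_pow, hpow l, hpow k, inv_one, mul_one]
    have hsum0 : ∑ j ∈ range m, w ^ j = 1 + ∑ j ∈ Finset.Icc 1 (m - 1), w ^ j := by
      rw [hrange, Finset.sum_insert (by simp), pow_zero]
    by_cases hkl : k = l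
    · subst hkl
      have hw1 : w = 1 := mul_inv_cancel₀ (pow_ne_zero _ hz0)
      rw [if_pos rfl]
      calc ∑ j ∈ Finset.Icc 1 (m - 1), w ^ j
          = ∑ j ∈ Finset.Icc 1 (m - 1), (1 : ℂ) := by simp [hw1]
        _ = ((m - 1 : ℕ) : ℂ) := by simp [Nat.card_Icc]
        _ = (m : ℂ) - 1 := by rw [Nat.cast_sub hm1]; simp
    · have hw1 : w ≠ 1 := by
        intro h
        apply hkl
        have hk0 : (ζ : ℂ) ^ k ≠ 0 := pow_ne_zero _ hz0
        have hkl' : ζ ^ k = ζ ^ l := by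
          rw [hw, mul_inv_eq_one₀ hk0] at h
          exact h.symm
        exact hprim.pow_inj (Finset.mem_range.mp hk) (Finset.mem_range.mp hl) hkl'
      have h0 := aux_geom w m hwm hw1
      rw [hsum0] at h0
      rw [if_neg hkl]
      linear_combination h0
  have h3 : (∑ k ∈ range m, ∑ l ∈ range m, ∑ j ∈ Finset.Icc 1 (m - 1),
        ((k : ℂ) * l) * ((ζ ^ l * (ζ ^ k)⁻¹) ^ j))
      = (m : ℂ) * (∑ k ∈ range m, (k : ℂ) * k)
        - (∑ k ∈ range m, (k : ℂ)) * (∑ k ∈ range m, (k : ℂ)) := by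
    rw [Finset.sum_congr rfl (fun k hk => Finset.sum_congr rfl (fun l hl => hinner k hk l hl))]
    have e : ∀ k ∈ range m,
        ∑ l ∈ range m, ((k : ℂ) * l) * ((if k = l then (m : ℂ) else 0) - 1)
          = (m : ℂ) * ((k : ℂ) * k) - (k : ℂ) * ∑ l ∈ range m, (l : ℂ) := by
      intro k hk
      have e' : ∀ l, ((k : ℂ) * l) * ((if k = l then (m : ℂ) else 0) - 1)
          = (if k = l then (m : ℂ) * ((k : ℂ) * l) else 0) - (k : ℂ) * l := by
        intro l; split <;> ring
      simp only [e']
      rw [Finset.sum_sub_distrib, Finset.sum_ite_eq, if_pos hk, ← Finset.mul_sum]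
    rw [Finset.sum_congr rfl e, Finset.sum_sub_distrib, ← Finset.mul_sum, ← Finset.sum_mul]
  rw [h3]
  have hs1 : ∀ N : ℕ, (∑ k ∈ range N, (k : ℂ)) = N * (N - 1) / 2 := by
    intro N
    induction N with
    | zero => simp
    | succ N ih => rw [sum_range_succ, ih]; push_cast; ring
  have hs2 : ∀ N : ℕ, (∑ k ∈ range N, (k : ℂ) * k) = N * (N - 1) * (2 * N - 1) / 6 := by
    intro N
    induction N with
    | zero => simp
    | succ N ih => rw [sum_range_succ, ih]; push_cast; ring
  rw [hs1 m, hs2 m]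
  have hmc : (m : ℂ) = 2 * n := by rw [hmdef]; push_cast; ring
  have hn0 : (n : ℂ) ≠ 0 := Nat.cast_ne_zero.mpr (by omega)
  rw [hmc]
  field_simp
  ring
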